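/- The extremes test is asymptotically powerless when the contamination correlation stays bounded away from 1: if ε_n = n^{-β} with β ∈ (0,1) fixed and (ρ_n) is a sequence with ρ_n ≤ ρ* for all n for some fixed ρ* < 1, then for every sequence of thresholds (t_n), the sum of the type I and type II error probabilities of the test rejecting when min_{1≤i≤n} |U_i| ≤ t_n, where U_i := (X_i − Y_i)/√2, has liminf at least 1. -/

import Mathlib

open MeasureTheory ProbabilityTheory Real Filter Topology

noncomputable section

/-- The standard normal distribution on ℝ. -/
def stdGauss : Measure ℝ := gaussianReal 0 1

/-- Two independent standard normals. -/
def stdGauss2 : Measure (ℝ × ℝ) := stdGauss.prod stdGauss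

/-- `N(0, Σ_ρ)`: the centered bivariate normal with unit marginal variances and
correlation `ρ`, i.e. the law of `(Z₁, ρ Z₁ + √(1-ρ²) Z₂)` for independent standard
normal `Z₁, Z₂`. -/
def biNormal (ρ : ℝ) : Measure (ℝ × ℝ) :=
  stdGauss2.map fun z => (z.1, ρ * z.1 + Real.sqrt (1 - ρ ^ 2) * z.2)

/-- The contamination mixture `P_{ε,ρ} = (1-ε) N(0,Σ₀) + ε N(0,Σ_ρ)`. -/
def mixture (ε ρ : ℝ) : Measure (ℝ × ℝ) :=
  ENNReal.ofReal (1 - ε) • biNormal 0 + ENNReal.ofReal ε • biNormal ρ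

/-- The `n`-fold product (i.i.d.) measure. -/
def iid (n : ℕ) (μ : Measure (ℝ × ℝ)) : Measure (Fin n → ℝ × ℝ) :=
  Measure.pi fun _ => μ
/-- The pairwise differences `Uᵢ = (Xᵢ - Yᵢ)/√2`. -/
def pairDiff (n : ℕ) (x : Fin n → ℝ × ℝ) (i : Fin n) : ℝ :=
  ((x i).1 - (x i).2) / Real.sqrt 2

/-- The rejection region of the extremes test: `min_{1 ≤ i ≤ n} |Uᵢ| ≤ t`
(equivalently, some `|Uᵢ| ≤ t`). -/
def extremesReject (n : ℕ) (t : ℝ) : Set (Fin n → ℝ × ℝ) :=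
  {x | ∃ i : Fin n, |pairDiff n x i| ≤ t}

/-! ### Auxiliary material -/

/-- The statistic `U = (X - Y)/√2` on a single pair. -/
def U : ℝ × ℝ → ℝ := fun p => (p.1 - p.2) / Real.sqrt 2

lemma measurable_U : Measurable U := (measurable_fst.sub measurable_snd).div_const _

lemma measurable_biMap (ρ : ℝ) :
    Measurable fun z : ℝ × ℝ => (z.1, ρ * z.1 + Real.sqrt (1 - ρ ^ 2) * z.2) :=
  measurable_fst.prodMk ((measurable_fst.const_mul ρ).add (measurable_snd.const_mul _))

instance : IsProbabilityMeasure stdGauss := by unfold stdGauss; infer_instance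
instance : IsProbabilityMeasure stdGauss2 := by unfold stdGauss2; infer_instance
instance (ρ : ℝ) : IsProbabilityMeasure (biNormal ρ) :=
  Measure.isProbabilityMeasure_map (measurable_biMap ρ).aemeasurable

lemma pdf_conv (a b u z : ℝ) (hb : b ≠ 0) :
    gaussianPDFReal (a*z) (b^2).toNNReal u * gaussianPDFReal 0 1 z
      = gaussianPDFReal 0 (a^2+b^2).toNNReal u
          * gaussianPDFReal (a*u/(a^2+b^2)) (b^2/(a^2+b^2)).toNNReal z := by
  have hb2 : (0:ℝ) < b^2 := by positivity
  have hs : (0:ℝ) < a^2 + b^2 := by positivity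
  have h1 : ((b^2).toNNReal : ℝ) = b^2 := Real.coe_toNNReal _ hb2.le
  have h2 : ((a^2+b^2).toNNReal : ℝ) = a^2+b^2 := Real.coe_toNNReal _ hs.le
  have h3 : ((b^2/(a^2+b^2)).toNNReal : ℝ) = b^2/(a^2+b^2) := Real.coe_toNNReal _ (by positivity)
  simp only [gaussianPDFReal, h1, h2, h3, NNReal.coe_one]
  have hpi : (0:ℝ) < 2*π := by positivity
  have hC : (√(2*π*b^2))⁻¹ * (√(2*π*1))⁻¹
      = (√(2*π*(a^2+b^2)))⁻¹ * (√(2*π*(b^2/(a^2+b^2))))⁻¹ := by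
    rw [← mul_inv, ← mul_inv, ← Real.sqrt_mul (by positivity), ← Real.sqrt_mul (by positivity)]
    congr 2
    field_simp
  have hE : (-(u - a*z)^2/(2*b^2)) + (-(z-0)^2/(2*1))
      = (-(u-0)^2/(2*(a^2+b^2))) + (-(z - a*u/(a^2+b^2))^2/(2*(b^2/(a^2+b^2)))) := by
    field_simp
    ring
  calc (√(2*π*b^2))⁻¹ * rexp (-(u - a*z)^2/(2*b^2)) * ((√(2*π*1))⁻¹ * rexp (-(z-0)^2/(2*1)))
      = ((√(2*π*b^2))⁻¹ * (√(2*π*1))⁻¹) * rexp ((-(u - a*z)^2/(2*b^2)) + (-(z-0)^2/(2*1))) := by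
        rw [Real.exp_add]; ring
    _ = ((√(2*π*(a^2+b^2)))⁻¹ * (√(2*π*(b^2/(a^2+b^2))))⁻¹)
          * rexp ((-(u-0)^2/(2*(a^2+b^2))) + (-(z - a*u/(a^2+b^2))^2/(2*(b^2/(a^2+b^2))))) := by
        rw [hC, hE]
    _ = _ := by rw [Real.exp_add]; ring

lemma gauss_law_affine (c d : ℝ) :
    stdGauss.map (fun y => c + d * y) = gaussianReal c (d^2).toNNReal := by
  have h1 : (fun y : ℝ => c + d * y) = (fun y => c + y) ∘ (fun y : ℝ => d * y) := rfl
  rw [h1, ← Measure.map_map (measurable_const_add c) (measurable_const_mul d)]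
  have h2 : stdGauss.map (fun y : ℝ => d * y) = gaussianReal 0 (d^2).toNNReal := by
    have h := gaussianReal_map_const_mul (μ := 0) (v := 1) d
    rw [stdGauss]
    convert h using 2
    · simp
    · ext; rw [NNReal.coe_mul, NNReal.coe_one, mul_one, Real.coe_toNNReal _ (sq_nonneg d)]; rfl
  rw [h2]
  have h := gaussianReal_map_const_add (μ := 0) (v := (d^2).toNNReal) c
  simpa using h

lemma gauss_sum (a b : ℝ) (hb : b ≠ 0) :
    stdGauss2.map (fun z : ℝ × ℝ => a * z.1 + b * z.2) = gaussianReal 0 (a^2+b^2).toNNReal := by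
  have hb2 : (0:ℝ) < b^2 := by positivity
  have hs : (0:ℝ) < a^2 + b^2 := by positivity
  have hvb0 : (b^2).toNNReal ≠ 0 := by simp [Real.toNNReal_eq_zero, not_le, hb2, hb]
  have hvs0 : (a^2+b^2).toNNReal ≠ 0 := by simp [Real.toNNReal_eq_zero, not_le, hs]
  have hv'0 : ∀ u : ℝ, (b^2/(a^2+b^2)).toNNReal ≠ 0 := by
    intro u; simp only [ne_eq, Real.toNNReal_eq_zero, not_le]; positivity
  have hmeas : Measurable fun z : ℝ × ℝ => a * z.1 + b * z.2 :=
    (measurable_fst.const_mul a).add (measurable_snd.const_mul b)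
  have hGm : Measurable fun p : ℝ × ℝ => gaussianPDF (a*p.1) (b^2).toNNReal p.2 := by
    apply Measurable.ennreal_ofReal
    unfold gaussianPDFReal
    fun_prop
  ext S hS
  rw [Measure.map_apply hmeas hS, stdGauss2, Measure.prod_apply (hmeas hS)]
  have hsec : ∀ z : ℝ, stdGauss (Prod.mk z ⁻¹' ((fun z : ℝ × ℝ => a * z.1 + b * z.2) ⁻¹' S))
      = ∫⁻ u, S.indicator (gaussianPDF (a*z) (b^2).toNNReal) u := by
    intro z
    have h1 : Prod.mk z ⁻¹' ((fun z : ℝ × ℝ => a * z.1 + b * z.2) ⁻¹' S)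
        = (fun y => a * z + b * y) ⁻¹' S := rfl
    rw [h1, ← Measure.map_apply (by fun_prop) hS, gauss_law_affine,
      gaussianReal_apply _ hvb0, ← lintegral_indicator hS _]
  simp_rw [hsec]
  have hstd : stdGauss = volume.withDensity (gaussianPDF 0 1) := by
    rw [stdGauss, gaussianReal_of_var_ne_zero _ one_ne_zero]
  have hIndM : Measurable fun p : ℝ × ℝ => S.indicator (gaussianPDF (a*p.1) (b^2).toNNReal) p.2 := by
    have heq : (fun p : ℝ × ℝ => S.indicator (gaussianPDF (a*p.1) (b^2).toNNReal) p.2)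
        = (Set.univ ×ˢ S).indicator (fun p => gaussianPDF (a*p.1) (b^2).toNNReal p.2) := by
      ext p; by_cases h : p.2 ∈ S <;> simp [Set.indicator, h]
    rw [heq]; exact hGm.indicator (MeasurableSet.univ.prod hS)
  have hfm : Measurable fun z : ℝ => ∫⁻ u, S.indicator (gaussianPDF (a*z) (b^2).toNNReal) u :=
    Measurable.lintegral_prod_right hIndM
  rw [hstd, lintegral_withDensity_eq_lintegral_mul _ (measurable_gaussianPDF 0 1) hfm]
  have hkey : ∀ u : ℝ, ∫⁻ z, gaussianPDF 0 1 z * gaussianPDF (a*z) (b^2).toNNReal u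
      = gaussianPDF 0 (a^2+b^2).toNNReal u := by
    intro u
    have h1 : ∀ z : ℝ, gaussianPDF 0 1 z * gaussianPDF (a*z) (b^2).toNNReal u
        = ENNReal.ofReal (gaussianPDFReal 0 (a^2+b^2).toNNReal u)
            * gaussianPDF (a*u/(a^2+b^2)) (b^2/(a^2+b^2)).toNNReal z := by
      intro z
      rw [gaussianPDF, gaussianPDF, gaussianPDF, ← ENNReal.ofReal_mul (gaussianPDFReal_nonneg _ _ _),
        ← ENNReal.ofReal_mul (gaussianPDFReal_nonneg _ _ _), mul_comm (gaussianPDFReal 0 1 z),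
        pdf_conv a b u z hb]
    simp_rw [h1]
    rw [lintegral_const_mul _ (measurable_gaussianPDF _ _), lintegral_gaussianPDF_eq_one _ (hv'0 u),
      mul_one, gaussianPDF]
  calc ∫⁻ z, (gaussianPDF 0 1 * fun z => ∫⁻ u, S.indicator (gaussianPDF (a*z) (b^2).toNNReal) u) z
      = ∫⁻ z, ∫⁻ u, gaussianPDF 0 1 z * S.indicator (gaussianPDF (a*z) (b^2).toNNReal) u := by
        simp_rw [Pi.mul_apply]
        congr 1; ext z
        rw [lintegral_const_mul _ ((measurable_gaussianPDF _ _).indicator hS)]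
    _ = ∫⁻ u, ∫⁻ z, gaussianPDF 0 1 z * S.indicator (gaussianPDF (a*z) (b^2).toNNReal) u := by
        refine lintegral_lintegral_swap ?_
        exact (((measurable_gaussianPDF 0 1).comp measurable_fst).mul hIndM).aemeasurable
    _ = ∫⁻ u, S.indicator (gaussianPDF 0 (a^2+b^2).toNNReal) u := by
        congr 1; ext u
        by_cases h : u ∈ S
        · simp only [Set.indicator_of_mem h]
          exact hkey u
        · simp [Set.indicator_of_notMem h]
    _ = (gaussianReal 0 (a^2+b^2).toNNReal) S := by
        rw [gaussianReal_apply _ hvs0, ← lintegral_indicator hS _]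

lemma biNormal_U_law (ρ : ℝ) (hρ0 : 0 ≤ ρ) (hρ1 : ρ < 1) :
    (biNormal ρ).map U = gaussianReal 0 (1-ρ).toNNReal := by
  have h2 : (0:ℝ) < Real.sqrt 2 := Real.sqrt_pos.mpr two_pos
  have hρ2 : (0:ℝ) < 1 - ρ^2 := by nlinarith
  set a : ℝ := (1-ρ) / Real.sqrt 2 with ha
  set b : ℝ := -(Real.sqrt (1-ρ^2) / Real.sqrt 2) with hb
  have hbne : b ≠ 0 := by
    rw [hb, neg_ne_zero]
    positivity
  have hcomp : U ∘ (fun z : ℝ × ℝ => (z.1, ρ * z.1 + Real.sqrt (1 - ρ ^ 2) * z.2))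
      = fun z : ℝ × ℝ => a * z.1 + b * z.2 := by
    funext z
    simp only [Function.comp_apply, U, ha, hb]
    field_simp
    ring
  have hab : a^2 + b^2 = 1 - ρ := by
    rw [ha, hb, neg_sq, div_pow, div_pow, Real.sq_sqrt (by norm_num : (2:ℝ) ≥ 0).le,
      Real.sq_sqrt hρ2.le]
    ring
  rw [biNormal, Measure.map_map measurable_U (measurable_biMap ρ), hcomp, gauss_sum a b hbne, hab]

lemma gauss_scale (v : ℝ) (hv : 0 < v) :
    gaussianReal 0 v.toNNReal = stdGauss.map (fun x => Real.sqrt v * x) := by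
  have := gauss_law_affine 0 (Real.sqrt v)
  simp only [zero_add] at this
  rw [this, Real.sq_sqrt hv.le]

lemma gauss_abs_mono_scaled (t : ℝ) (aa : ℝ) (haa : 1 ≤ aa) :
    ((gaussianReal 0 1) {x : ℝ | |x| ≤ aa * t}).toReal
      ≤ aa * ((gaussianReal 0 1) {x : ℝ | |x| ≤ t}).toReal := by
  have haa0 : 0 < aa := lt_of_lt_of_le one_pos haa
  rcases lt_or_ge t 0 with ht | ht
  · have hempty : {x : ℝ | |x| ≤ aa * t} = ∅ := by
      ext x; simp only [Set.mem_setOf_eq, Set.mem_empty_iff_false, iff_false, not_le]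
      exact lt_of_lt_of_le (by nlinarith) (abs_nonneg x)
    rw [hempty]
    simp only [measure_empty, ENNReal.toReal_zero]
    positivity
  · have hIcc : ∀ s : ℝ, {x : ℝ | |x| ≤ s} = Set.Icc (-s) s := by
      intro s; ext x; simp [abs_le]
    have hval : ∀ s : ℝ, 0 ≤ s → ((gaussianReal 0 1) {x : ℝ | |x| ≤ s}).toReal
        = ∫ x in (-s)..s, gaussianPDFReal 0 1 x := by
      intro s hs
      rw [hIcc, gaussianReal_apply_eq_integral _ one_ne_zero,
        ENNReal.toReal_ofReal (setIntegral_nonneg measurableSet_Icc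
          (fun x _ => gaussianPDFReal_nonneg _ _ _)),
        MeasureTheory.integral_Icc_eq_integral_Ioc,
        ← intervalIntegral.integral_of_le (by linarith : -s ≤ s)]
    rw [hval _ ht, hval _ (by positivity)]
    have hsub : ∫ x in (-(aa*t))..(aa*t), gaussianPDFReal 0 1 x
        = aa * ∫ x in (-t)..t, gaussianPDFReal 0 1 (aa * x) := by
      rw [intervalIntegral.integral_comp_mul_left (fun u => gaussianPDFReal 0 1 u) (ne_of_gt haa0)]
      rw [smul_eq_mul, ← mul_assoc, mul_inv_cancel₀ (ne_of_gt haa0), one_mul, mul_neg]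
    rw [hsub]
    have hptle : ∀ x ∈ Set.Icc (-t) t, gaussianPDFReal 0 1 (aa * x) ≤ gaussianPDFReal 0 1 x := by
      intro x _
      unfold gaussianPDFReal
      apply mul_le_mul_of_nonneg_left _ (by positivity)
      apply Real.exp_le_exp.mpr
      have hc : ((1:NNReal):ℝ) = 1 := rfl
      rw [hc]
      have : x^2 ≤ (aa*x)^2 := by
        nlinarith [mul_nonneg (by nlinarith : (0:ℝ) ≤ aa^2 - 1) (sq_nonneg x)]
      nlinarith
    have hint1 : IntervalIntegrable (fun x => gaussianPDFReal 0 1 (aa * x)) volume (-t) t := by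
      apply Continuous.intervalIntegrable
      unfold gaussianPDFReal
      fun_prop
    have hint2 : IntervalIntegrable (fun x => gaussianPDFReal 0 1 x) volume (-t) t := by
      apply Continuous.intervalIntegrable
      unfold gaussianPDFReal
      fun_prop
    exact mul_le_mul_of_nonneg_left
      (intervalIntegral.integral_mono_on (by linarith) hint1 hint2 hptle) haa0.le

lemma gauss_compare (v : ℝ) (hv0 : 0 < v) (hv1 : v ≤ 1) (t : ℝ) :
    ((gaussianReal 0 v.toNNReal) {u : ℝ | |u| ≤ t}).toReal
      ≤ (Real.sqrt v)⁻¹ * ((gaussianReal 0 1) {u : ℝ | |u| ≤ t}).toReal := by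
  have hsv : 0 < Real.sqrt v := Real.sqrt_pos.mpr hv0
  have hB : MeasurableSet {u : ℝ | |u| ≤ t} := measurableSet_le measurable_abs measurable_const
  rw [gauss_scale v hv0, Measure.map_apply (measurable_const_mul _) hB]
  have hset : (fun x => Real.sqrt v * x) ⁻¹' {u : ℝ | |u| ≤ t}
      = {x : ℝ | |x| ≤ (Real.sqrt v)⁻¹ * t} := by
    ext x
    simp only [Set.mem_preimage, Set.mem_setOf_eq, abs_mul, abs_of_pos hsv]
    rw [inv_mul_eq_div, ← le_div_iff₀' hsv]
  rw [hset]
  have haa : 1 ≤ (Real.sqrt v)⁻¹ := (one_le_inv₀ hsv).mpr (Real.sqrt_le_one.mpr hv1)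
  show ((gaussianReal 0 1) {x : ℝ | |x| ≤ (Real.sqrt v)⁻¹ * t}).toReal ≤ _
  exact gauss_abs_mono_scaled t _ haa

/-- the event on one pair -/
def Aev (t : ℝ) : Set (ℝ × ℝ) := {p | |U p| ≤ t}

lemma measurableSet_Aev (t : ℝ) : MeasurableSet (Aev t) :=
  measurableSet_le measurable_U.abs measurable_const

lemma mixture_isProb (ε ρ : ℝ) (h0 : 0 ≤ ε) (h1 : ε ≤ 1) :
    IsProbabilityMeasure (mixture ε ρ) := by
  constructor
  rw [mixture, Measure.add_apply, Measure.smul_apply, Measure.smul_apply,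
    measure_univ, measure_univ, smul_eq_mul, smul_eq_mul, mul_one, mul_one,
    ← ENNReal.ofReal_add (by linarith) h0]
  norm_num

lemma mixture_apply_toReal (ε ρ : ℝ) (h0 : 0 ≤ ε) (h1 : ε ≤ 1) (W : Set (ℝ × ℝ)) :
    ((mixture ε ρ) W).toReal = (1-ε) * (biNormal 0 W).toReal + ε * (biNormal ρ W).toReal := by
  rw [mixture, Measure.add_apply, Measure.smul_apply, Measure.smul_apply, smul_eq_mul,
    smul_eq_mul, ENNReal.toReal_add, ENNReal.toReal_mul, ENNReal.toReal_mul,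
    ENNReal.toReal_ofReal (by linarith), ENNReal.toReal_ofReal h0]
  · exact ENNReal.mul_ne_top ENNReal.ofReal_ne_top (measure_ne_top _ _)
  · exact ENNReal.mul_ne_top ENNReal.ofReal_ne_top (measure_ne_top _ _)

lemma iid_reject_toReal (n : ℕ) (t : ℝ) (μ : Measure (ℝ × ℝ)) [IsProbabilityMeasure μ] :
    ((iid n μ) (extremesReject n t)).toReal = 1 - (1 - (μ (Aev t)).toReal) ^ n := by
  haveI : IsProbabilityMeasure (iid n μ) := by
    unfold iid; infer_instance
  have hcompl : (extremesReject n t)ᶜ = Set.pi Set.univ (fun _ : Fin n => (Aev t)ᶜ) := by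
    ext x
    simp only [extremesReject, Set.mem_compl_iff, Set.mem_setOf_eq, not_exists, Set.mem_pi,
      Set.mem_univ, forall_true_left, Aev, U, pairDiff]
  have hpi : (iid n μ) (Set.pi Set.univ (fun _ : Fin n => (Aev t)ᶜ)) = (μ (Aev t)ᶜ)^n := by
    rw [iid, Measure.pi_pi]
    simp
  have hmeas : MeasurableSet ((extremesReject n t)ᶜ) := by
    rw [hcompl]
    exact MeasurableSet.univ_pi fun _ => (measurableSet_Aev t).compl
  have h1 : (iid n μ) (extremesReject n t) = 1 - (μ (Aev t)ᶜ)^n := by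
    rw [← compl_compl (extremesReject n t), prob_compl_eq_one_sub hmeas, hcompl, hpi]
  rw [h1, ENNReal.toReal_sub_of_le (pow_le_one' prob_le_one n) ENNReal.one_ne_top,
    ENNReal.toReal_pow, ENNReal.toReal_one, prob_compl_eq_one_sub (measurableSet_Aev t),
    ENNReal.toReal_sub_of_le prob_le_one ENNReal.one_ne_top, ENNReal.toReal_one]

lemma pow_sub_pow_le_n (a b : ℝ) (hb : 0 ≤ b) (hba : b ≤ a) (ha : a ≤ 1) (n : ℕ) :
    a^n - b^n ≤ n * (a - b) := by
  induction n with
  | zero => simp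
  | succ n ih =>
    have h1 : b^n ≤ a^n := pow_le_pow_left₀ hb hba n
    have h3 : a^n ≤ 1 := pow_le_one₀ (hb.trans hba) ha
    have heq : a^(n+1) - b^(n+1) = a * (a^n - b^n) + (a-b) * b^n := by ring
    rw [heq]
    push_cast
    nlinarith [sub_nonneg.mpr hba, sub_nonneg.mpr h1, pow_le_one₀ (n := n) hb (hba.trans ha)]

lemma aux_liminf (β c : ℝ) (hβ0 : 0 < β) (hc : 1 ≤ c)
    (p0 pm : ℕ → ℝ) (hp00 : ∀ n, 0 ≤ p0 n) (hp01 : ∀ n, p0 n ≤ 1)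
    (hpm0 : ∀ n, 0 ≤ pm n) (hpm1 : ∀ n, pm n ≤ 1)
    (hgap : ∀ n, pm n ≤ p0 n + (n:ℝ)^(-β) * ((c - 1) * p0 n)) :
    1 ≤ liminf (fun n => 1 - ((1 - p0 n)^n - (1 - pm n)^n)) atTop := by
  have hc1 : 0 ≤ c - 1 := by linarith
  set Dbd : ℕ → ℝ :=
    fun n => min ((1 - p0 n)^n) ((n:ℝ) * ((n:ℝ)^(-β) * ((c-1) * p0 n))) with hDbd
  have hDbd_nonneg : ∀ n, 0 ≤ Dbd n := by
    intro n
    refine le_min (pow_nonneg (by linarith [hp01 n]) n) ?_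
    have : (0:ℝ) ≤ (n:ℝ)^(-β) := Real.rpow_nonneg (Nat.cast_nonneg n) _
    exact mul_nonneg (Nat.cast_nonneg n) (mul_nonneg this (mul_nonneg hc1 (hp00 n)))
  have hD_le : ∀ n, (1 - p0 n)^n - (1 - pm n)^n ≤ Dbd n := by
    intro n
    refine le_min ?_ ?_
    · have : (0:ℝ) ≤ (1 - pm n)^n := pow_nonneg (by linarith [hpm1 n]) n
      linarith
    · rcases le_or_gt (pm n) (p0 n) with h | h
      · have h1 : (1 - p0 n)^n ≤ (1 - pm n)^n :=
          pow_le_pow_left₀ (by linarith [hp01 n]) (by linarith) n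
        have : (0:ℝ) ≤ (n:ℝ)^(-β) := Real.rpow_nonneg (Nat.cast_nonneg n) _
        have h2 : (0:ℝ) ≤ (n:ℝ) * ((n:ℝ)^(-β) * ((c-1) * p0 n)) :=
          mul_nonneg (Nat.cast_nonneg n) (mul_nonneg this (mul_nonneg hc1 (hp00 n)))
        linarith
      · have h1 : (1 - p0 n)^n - (1 - pm n)^n ≤ n * ((1 - p0 n) - (1 - pm n)) :=
          pow_sub_pow_le_n _ _ (by linarith [hpm1 n]) (by linarith) (by linarith [hp00 n]) n
        have h2 : (1 - p0 n) - (1 - pm n) = pm n - p0 n := by ring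
        have h3 : pm n - p0 n ≤ (n:ℝ)^(-β) * ((c-1) * p0 n) := by linarith [hgap n]
        calc (1 - p0 n)^n - (1 - pm n)^n ≤ (n:ℝ) * (pm n - p0 n) := by rw [← h2]; exact h1
          _ ≤ (n:ℝ) * ((n:ℝ)^(-β) * ((c-1) * p0 n)) :=
            mul_le_mul_of_nonneg_left h3 (Nat.cast_nonneg n)
  have hTend : Tendsto Dbd atTop (𝓝 0) := by
    rw [Metric.tendsto_atTop]
    intro δ hδ
    set δ' := min δ 1 with hδ'
    have hδ'0 : 0 < δ' := lt_min hδ one_pos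
    have hδ'1 : δ' ≤ 1 := min_le_right _ _
    have hδ'δ : δ' ≤ δ := min_le_left _ _
    set K := Real.log (2/δ') with hK
    have hK0 : 0 ≤ K := Real.log_nonneg (by rw [le_div_iff₀ hδ'0]; linarith)
    have hrp : Tendsto (fun n : ℕ => ((c-1)*K) * (n:ℝ)^(-β)) atTop (𝓝 0) := by
      have h1 : Tendsto (fun x : ℝ => x ^ (-β)) atTop (𝓝 0) :=
        tendsto_rpow_neg_atTop hβ0
      have h2 : Tendsto (fun n : ℕ => (n:ℝ)^(-β)) atTop (𝓝 0) :=
        h1.comp tendsto_natCast_atTop_atTop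
      simpa using h2.const_mul ((c-1)*K)
    rw [Metric.tendsto_atTop] at hrp
    obtain ⟨N, hN⟩ := hrp δ' hδ'0
    refine ⟨N, fun n hn => ?_⟩
    have hNd := hN n hn
    rw [Real.dist_eq, sub_zero] at hNd ⊢
    rw [abs_of_nonneg (hDbd_nonneg n)]
    have hb2nn : (0:ℝ) ≤ ((c-1)*K) * (n:ℝ)^(-β) := by
      have : (0:ℝ) ≤ (n:ℝ)^(-β) := Real.rpow_nonneg (Nat.cast_nonneg n) _
      positivity
    rw [abs_of_nonneg hb2nn] at hNd
    rcases le_or_gt ((n:ℝ) * p0 n) K with h | h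
    · calc Dbd n ≤ (n:ℝ) * ((n:ℝ)^(-β) * ((c-1) * p0 n)) := min_le_right _ _
        _ = ((c-1) * ((n:ℝ) * p0 n)) * (n:ℝ)^(-β) := by ring
        _ ≤ ((c-1)*K) * (n:ℝ)^(-β) := by
            have : (0:ℝ) ≤ (n:ℝ)^(-β) := Real.rpow_nonneg (Nat.cast_nonneg n) _
            have h4 : (c-1) * ((n:ℝ) * p0 n) ≤ (c-1)*K :=
              mul_le_mul_of_nonneg_left h hc1
            exact mul_le_mul_of_nonneg_right h4 this
        _ < δ' := hNd
        _ ≤ δ := hδ'δ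
    · have h1 : (1 - p0 n) ≤ Real.exp (-(p0 n)) := by
        have := Real.add_one_le_exp (-(p0 n)); linarith
      have h2 : (1 - p0 n)^n ≤ Real.exp (-(p0 n))^n :=
        pow_le_pow_left₀ (by linarith [hp01 n]) h1 n
      have h3 : Real.exp (-(p0 n))^n = Real.exp (-((n:ℝ) * p0 n)) := by
        rw [← Real.exp_nat_mul]; ring_nf
      have h4 : Real.exp (-((n:ℝ) * p0 n)) < Real.exp (-K) :=
        Real.exp_lt_exp.mpr (by linarith)
      have h5 : Real.exp (-K) = δ'/2 := by
        rw [hK, Real.exp_neg, Real.exp_log (by positivity), inv_div]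
      calc Dbd n ≤ (1 - p0 n)^n := min_le_left _ _
        _ ≤ Real.exp (-(p0 n))^n := h2
        _ < δ'/2 := by rw [h3]; rw [h5] at h4; exact h4
        _ < δ := by linarith
  have hg : Tendsto (fun n => 1 - Dbd n) atTop (𝓝 1) := by
    simpa using tendsto_const_nhds.sub hTend
  have hle : ∀ n, 1 - Dbd n ≤ 1 - ((1 - p0 n)^n - (1 - pm n)^n) :=
    fun n => by linarith [hD_le n]
  calc (1:ℝ) = liminf (fun n => 1 - Dbd n) atTop := hg.liminf_eq.symm
    _ ≤ liminf (fun n => 1 - ((1 - p0 n)^n - (1 - pm n)^n)) atTop := by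
        have hu : IsBoundedUnder (· ≥ ·) atTop (fun n => 1 - Dbd n) := by
          refine ⟨0, ?_⟩
          rw [eventually_map]
          refine Eventually.of_forall fun n => ?_
          have h1 : Dbd n ≤ (1 - p0 n)^n := min_le_left _ _
          have h2 : (1 - p0 n)^n ≤ 1 := pow_le_one₀ (by linarith [hp01 n]) (by linarith [hp00 n])
          show _ ≥ _
          linarith
        have hv : IsCoboundedUnder (· ≥ ·) atTop
            (fun n => 1 - ((1 - p0 n)^n - (1 - pm n)^n)) := by
          refine IsBoundedUnder.isCoboundedUnder_ge ⟨2, ?_⟩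
          rw [eventually_map]
          refine Eventually.of_forall fun n => ?_
          have h1 : (1 - pm n)^n ≤ 1 := pow_le_one₀ (by linarith [hpm1 n]) (by linarith [hpm0 n])
          have h2 : (0:ℝ) ≤ (1 - p0 n)^n := pow_nonneg (by linarith [hp01 n]) n
          show _ ≤ _
          linarith
        exact liminf_le_liminf (Eventually.of_forall hle) hu hv

/-- if `ρₙ` stays bounded away from 1, the extremes test is asymptotically
powerless for any choice of thresholds `(tₙ)`. -/
theorem extremes_powerless_rho_bounded (β : ℝ) (hβ0 : 0 < β) (hβ1 : β < 1)
    (ρstar : ℝ) (hρstar : ρstar < 1)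
    (ε ρ : ℕ → ℝ) (hε : ∀ n : ℕ, ε n = (n : ℝ) ^ (-β))
    (hρ0 : ∀ n : ℕ, 0 ≤ ρ n) (hρ1 : ∀ n : ℕ, ρ n ≤ ρstar) :
    ∀ t : ℕ → ℝ,
      1 ≤ Filter.liminf (fun n =>
        ((iid n (biNormal 0)) (extremesReject n (t n))).toReal
          + (1 - ((iid n (mixture (ε n) (ρ n))) (extremesReject n (t n))).toReal)) atTop := by
  intro t
  have hρstar0 : 0 ≤ ρstar := (hρ0 0).trans (hρ1 0)
  have hsp : (0:ℝ) < 1 - ρstar := by linarith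
  set c : ℝ := (Real.sqrt (1 - ρstar))⁻¹ with hcdef
  have hsq0 : 0 < Real.sqrt (1 - ρstar) := Real.sqrt_pos.mpr hsp
  have hc1 : 1 ≤ c := (one_le_inv₀ hsq0).mpr (Real.sqrt_le_one.mpr (by linarith))
  have hε0 : ∀ n, 0 ≤ ε n := by
    intro n; rw [hε n]; exact Real.rpow_nonneg (Nat.cast_nonneg n) _
  have hε1 : ∀ n, ε n ≤ 1 := by
    intro n; rw [hε n]
    rcases Nat.eq_zero_or_pos n with h | h
    · subst h
      rw [Nat.cast_zero, Real.zero_rpow (neg_ne_zero.mpr hβ0.ne')]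
      norm_num
    · exact Real.rpow_le_one_of_one_le_of_nonpos
        (by exact_mod_cast h) (neg_nonpos.mpr hβ0.le)
  set p0 : ℕ → ℝ := fun n => (biNormal 0 (Aev (t n))).toReal with hp0def
  set pρ : ℕ → ℝ := fun n => (biNormal (ρ n) (Aev (t n))).toReal with hpρdef
  set pm : ℕ → ℝ := fun n => (1 - ε n) * p0 n + ε n * pρ n with hpmdef
  have hp00 : ∀ n, 0 ≤ p0 n := fun n => ENNReal.toReal_nonneg
  have hpρ0 : ∀ n, 0 ≤ pρ n := fun n => ENNReal.toReal_nonneg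
  have hprob_le : ∀ (μ : Measure (ℝ × ℝ)) [IsProbabilityMeasure μ] (W : Set (ℝ × ℝ)),
      (μ W).toReal ≤ 1 := by
    intro μ _ W
    have h := ENNReal.toReal_mono ENNReal.one_ne_top (prob_le_one (μ := μ) (s := W))
    simpa using h
  have hp01 : ∀ n, p0 n ≤ 1 := fun n => hprob_le _ _
  have hpρ1 : ∀ n, pρ n ≤ 1 := fun n => hprob_le _ _
  have hpm0 : ∀ n, 0 ≤ pm n := by
    intro n
    have := hε0 n; have := hε1 n; have := hp00 n; have := hpρ0 n
    rw [hpmdef]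
    dsimp only
    nlinarith
  have hpm1 : ∀ n, pm n ≤ 1 := by
    intro n
    have := hε0 n; have := hε1 n; have := hp00 n; have := hpρ0 n
    have := hp01 n; have := hpρ1 n
    rw [hpmdef]
    dsimp only
    nlinarith
  -- the law identities
  have hAev : ∀ n, Aev (t n) = U ⁻¹' {u : ℝ | |u| ≤ t n} := fun n => rfl
  have hBmeas : ∀ n, MeasurableSet {u : ℝ | |u| ≤ t n} :=
    fun n => measurableSet_le measurable_abs measurable_const
  have hlaw : ∀ n (r : ℝ), 0 ≤ r → r < 1 →
      biNormal r (Aev (t n)) = gaussianReal 0 (1-r).toNNReal {u : ℝ | |u| ≤ t n} := by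
    intro n r hr0 hr1
    rw [hAev, ← Measure.map_apply measurable_U (hBmeas n), biNormal_U_law r hr0 hr1]
  have hp0gauss : ∀ n, p0 n = ((gaussianReal 0 1) {u : ℝ | |u| ≤ t n}).toReal := by
    intro n
    rw [hp0def]
    dsimp only
    rw [hlaw n 0 le_rfl one_pos]
    norm_num
  have hcomp : ∀ n, pρ n ≤ c * p0 n := by
    intro n
    have hr1 : ρ n < 1 := lt_of_le_of_lt (hρ1 n) hρstar
    have hv0 : (0:ℝ) < 1 - ρ n := by linarith
    have hv1 : (1:ℝ) - ρ n ≤ 1 := by linarith [hρ0 n]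
    have h1 : pρ n ≤ (Real.sqrt (1 - ρ n))⁻¹ * ((gaussianReal 0 1) {u : ℝ | |u| ≤ t n}).toReal := by
      rw [hpρdef]
      dsimp only
      rw [hlaw n (ρ n) (hρ0 n) hr1]
      exact gauss_compare _ hv0 hv1 _
    have h2 : (Real.sqrt (1 - ρ n))⁻¹ ≤ c := by
      rw [hcdef]
      apply inv_anti₀ hsq0
      exact Real.sqrt_le_sqrt (by linarith [hρ1 n])
    calc pρ n ≤ (Real.sqrt (1 - ρ n))⁻¹ * ((gaussianReal 0 1) {u : ℝ | |u| ≤ t n}).toReal := h1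
      _ ≤ c * ((gaussianReal 0 1) {u : ℝ | |u| ≤ t n}).toReal :=
          mul_le_mul_of_nonneg_right h2 ENNReal.toReal_nonneg
      _ = c * p0 n := by rw [hp0gauss n]
  have hgap : ∀ n, pm n ≤ p0 n + (n:ℝ)^(-β) * ((c - 1) * p0 n) := by
    intro n
    have h1 : pρ n - p0 n ≤ (c - 1) * p0 n := by
      have := hcomp n; nlinarith
    have h2 : ε n * (pρ n - p0 n) ≤ ε n * ((c-1) * p0 n) :=
      mul_le_mul_of_nonneg_left h1 (hε0 n)
    have h3 : pm n - p0 n = ε n * (pρ n - p0 n) := by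
      rw [hpmdef]; dsimp only; ring
    rw [← hε n]
    linarith
  -- rewrite the error-sum function
  have hfun : (fun n =>
        ((iid n (biNormal 0)) (extremesReject n (t n))).toReal
          + (1 - ((iid n (mixture (ε n) (ρ n))) (extremesReject n (t n))).toReal))
      = fun n => 1 - ((1 - p0 n)^n - (1 - pm n)^n) := by
    funext n
    haveI : IsProbabilityMeasure (mixture (ε n) (ρ n)) :=
      mixture_isProb _ _ (hε0 n) (hε1 n)
    rw [iid_reject_toReal n (t n) (biNormal 0), iid_reject_toReal n (t n) (mixture (ε n) (ρ n)),
      mixture_apply_toReal _ _ (hε0 n) (hε1 n)]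
    simp only [hp0def, hpρdef, hpmdef]
    ring
  rw [hfun]
  exact aux_liminf β c hβ0 hc1 p0 pm hp00 hp01 hpm0 hpm1 hgap
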